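/- There exists a universal constant C > 0 such that for every integer d ≥ 1 and every real t > 0, the d×d matrix L(t) with entries L(t)_{i,j} = λ([i-1,i) ∩ [(j-1)t², jt²)) and the unit vector z ∈ ℝ^d with z_i = Z_d^{-1/2} i^{-1/2} satisfy ⟨z, L(t) z⟩ ≥ t (1 - C · ln(1 + max(t, t⁻¹)) / (1 + ln d)). -/

import Mathlib

set_option maxHeartbeats 1000000


open MeasureTheory

noncomputable def Lmat (d : ℕ) (t : ℝ) : Matrix (Fin d) (Fin d) ℝ :=
  fun i j => (volume (Set.Ico (i : ℝ) ((i : ℝ) + 1) ∩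
    Set.Ico ((j : ℝ) * t ^ 2) (((j : ℝ) + 1) * t ^ 2))).toReal

/-- The harmonic number `Z_d = ∑_{i=1}^d 1/i`. -/
noncomputable def Zd (d : ℕ) : ℝ := ∑ i ∈ Finset.range d, ((i : ℝ) + 1)⁻¹

/-- The unit vector `z` with `z_i = Z_d^{-1/2} i^{-1/2}` (0-based index `i` stands for `i+1`). -/
noncomputable def zvec (d : ℕ) (i : Fin d) : ℝ :=
  (Real.sqrt (Zd d))⁻¹ * (Real.sqrt ((i : ℝ) + 1))⁻¹

noncomputable def gcl (a x : ℝ) : ℝ := min 1 (max 0 (x - a))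

lemma clamp_id (a c e : ℝ) (h : c ≤ e) :
    max (min (a+1) e - max a c) 0 = gcl a e - gcl a c := by
  unfold gcl
  rcases le_total (a+1) e with h1 | h1 <;> rcases le_total a c with h2 | h2 <;>
    simp [min_def, max_def] <;> split_ifs <;> linarith

lemma gcl_nonneg (a x : ℝ) : 0 ≤ gcl a x := le_min one_pos.le (le_max_left _ _)

lemma gcl_eq_one {a x : ℝ} (h : a + 1 ≤ x) : gcl a x = 1 :=
  min_eq_left (le_max_of_le_right (by linarith))

lemma Lmat_eq (d : ℕ) (t : ℝ) (i j : Fin d) :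
    Lmat d t i j = gcl (i : ℝ) (((j : ℝ)+1) * t^2) - gcl (i : ℝ) ((j : ℝ) * t^2) := by
  have hce : (j : ℝ) * t^2 ≤ ((j : ℝ)+1) * t^2 := by nlinarith [sq_nonneg t]
  rw [Lmat, Set.Ico_inter_Ico, Real.volume_Ico, ENNReal.toReal_ofReal']
  exact clamp_id _ _ _ hce

lemma Lmat_nonneg (d : ℕ) (t : ℝ) (i j : Fin d) : 0 ≤ Lmat d t i j :=
  ENNReal.toReal_nonneg

lemma Lmat_eq_zero (d : ℕ) (t : ℝ) (i j : Fin d) (h : (i:ℝ) + 1 ≤ (j:ℝ) * t^2) :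
    Lmat d t i j = 0 := by
  rw [Lmat_eq, gcl_eq_one (show (i:ℝ) + 1 ≤ ((j:ℝ)+1)*t^2 by nlinarith [sq_nonneg t]),
    gcl_eq_one h, sub_self]

lemma row_sum (d : ℕ) (t : ℝ) (i : Fin d) :
    ∑ j, Lmat d t i j = gcl (i : ℝ) (d * t^2) := by
  have : ∀ j : Fin d, Lmat d t i j =
      (fun n : ℕ => gcl (i : ℝ) (n * t^2)) (j+1) - (fun n : ℕ => gcl (i : ℝ) (n * t^2)) j := by
    intro j
    rw [Lmat_eq]
    push_cast
    ring_nf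
  rw [Finset.sum_congr rfl (fun j _ => this j), Fin.sum_univ_eq_sum_range
    (fun j => (fun n : ℕ => gcl (i : ℝ) (n * t^2)) (j+1) - (fun n : ℕ => gcl (i : ℝ) (n * t^2)) j),
    Finset.sum_range_sub (fun n : ℕ => gcl (i : ℝ) (n * t^2))]
  have h0 : gcl (i : ℝ) ((0:ℕ) * t^2) = 0 := by
    simp [gcl]
  rw [h0, sub_zero]

lemma zvec_nonneg (d : ℕ) (i : Fin d) : 0 ≤ zvec d i := by
  unfold zvec; positivity

lemma mu_ineq (μ : ℝ) (hμ : 1 ≤ μ) :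
    1 + Real.log 2 + 2 * Real.log μ ≤ 5 * Real.log (1+μ) := by
  have h1 : Real.log μ ≤ Real.log (1+μ) := Real.log_le_log (by linarith) (by linarith)
  have h2 : Real.log 2 ≤ Real.log (1+μ) := Real.log_le_log (by norm_num) (by linarith)
  have h3 := Real.log_two_gt_d9
  linarith

theorem lmat_bilinear_lower_bound :
    ∃ C : ℝ, 0 < C ∧ ∀ (d : ℕ) (t : ℝ), 1 ≤ d → 0 < t →
      t * (1 - C * Real.log (1 + max t t⁻¹) / (1 + Real.log d)) ≤
        ∑ i, ∑ j, Lmat d t i j * zvec d i * zvec d j := by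
  refine ⟨5, by norm_num, fun d t hd ht => ?_⟩
  have hd1 : (1:ℝ) ≤ (d:ℝ) := by exact_mod_cast hd
  set μ := max t t⁻¹ with hμdef
  have hμ : 1 ≤ μ := by
    rcases le_total 1 t with h | h
    · exact h.trans (le_max_left _ _)
    · have : 1 ≤ t⁻¹ := by nlinarith [mul_inv_cancel₀ ht.ne', inv_pos.mpr ht]
      exact this.trans (le_max_right _ _)
  set L := Real.log (1 + μ) with hLdef
  set D := 1 + Real.log d with hDdef
  have hL2 : Real.log 2 ≤ L := Real.log_le_log (by norm_num) (by linarith)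
  have hLpos : 0 < L := lt_of_lt_of_le (by linarith [Real.log_two_gt_d9]) hL2
  have hD : 0 < D := by
    have := Real.log_nonneg hd1
    rw [hDdef]; linarith
  have hZpos : 0 < Zd d := by
    rw [Zd]
    apply Finset.sum_pos (fun i _ => by positivity)
    exact Finset.nonempty_range_iff.mpr (by omega)
  have hZle : Zd d ≤ D := by
    have e : Zd d = ((harmonic d : ℚ) : ℝ) := by
      rw [Zd, harmonic]; push_cast; rfl
    rw [e, hDdef]
    exact harmonic_le_one_add_log d
  set k := min d (Nat.floor ((d:ℝ) * t^2)) with hk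
  -- Step A
  have hSA : (Zd d)⁻¹ * t * ∑ i ∈ Finset.range k, ((i:ℝ)+1+t^2)⁻¹ ≤
      ∑ i, ∑ j, Lmat d t i j * zvec d i * zvec d j := by
    have inner : ∀ i : Fin d,
        (Real.sqrt (Zd d))⁻¹ * t * (Real.sqrt ((i:ℝ)+1+t^2))⁻¹ * gcl (i:ℝ) (d*t^2) ≤
          ∑ j, Lmat d t i j * zvec d j := by
      intro i
      have hterm : ∀ j : Fin d,
          Lmat d t i j * ((Real.sqrt (Zd d))⁻¹ * (t * (Real.sqrt ((i:ℝ)+1+t^2))⁻¹)) ≤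
            Lmat d t i j * zvec d j := by
        intro j
        rcases le_or_gt ((i:ℝ)+1) ((j:ℝ)*t^2) with h | h
        · rw [Lmat_eq_zero d t i j h]; simp
        · apply mul_le_mul_of_nonneg_left _ (Lmat_nonneg d t i j)
          unfold zvec
          apply mul_le_mul_of_nonneg_left _ (by positivity)
          have hs1 : (0:ℝ) < Real.sqrt ((j:ℝ)+1) := Real.sqrt_pos.mpr (by positivity)
          have hs2 : (0:ℝ) < Real.sqrt ((i:ℝ)+1+t^2) := Real.sqrt_pos.mpr (by positivity)
          have key : t * Real.sqrt ((j:ℝ)+1) ≤ Real.sqrt ((i:ℝ)+1+t^2) := by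
            have e : t * Real.sqrt ((j:ℝ)+1) = Real.sqrt (((j:ℝ)+1) * t^2) := by
              rw [Real.sqrt_mul (by positivity), Real.sqrt_sq ht.le]; ring
            rw [e]
            exact Real.sqrt_le_sqrt (by nlinarith)
          rw [inv_eq_one_div, inv_eq_one_div, mul_one_div, div_le_div_iff₀ hs2 hs1]
          nlinarith
      calc (Real.sqrt (Zd d))⁻¹ * t * (Real.sqrt ((i:ℝ)+1+t^2))⁻¹ * gcl (i:ℝ) (d*t^2)
          = (∑ j, Lmat d t i j) * ((Real.sqrt (Zd d))⁻¹ * (t * (Real.sqrt ((i:ℝ)+1+t^2))⁻¹)) := by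
            rw [row_sum]; ring
        _ = ∑ j, Lmat d t i j * ((Real.sqrt (Zd d))⁻¹ * (t * (Real.sqrt ((i:ℝ)+1+t^2))⁻¹)) := by
            rw [Finset.sum_mul]
        _ ≤ ∑ j, Lmat d t i j * zvec d j := Finset.sum_le_sum (fun j _ => hterm j)
    have hsum_rw : ∑ i, ∑ j, Lmat d t i j * zvec d i * zvec d j =
        ∑ i : Fin d, zvec d i * ∑ j, Lmat d t i j * zvec d j := by
      refine Finset.sum_congr rfl (fun i _ => ?_)
      rw [Finset.mul_sum]
      exact Finset.sum_congr rfl (fun j _ => by ring)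
    rw [hsum_rw]
    have step1 : ∑ i : Fin d, zvec d i *
        ((Real.sqrt (Zd d))⁻¹ * t * (Real.sqrt ((i:ℝ)+1+t^2))⁻¹ * gcl (i:ℝ) (d*t^2)) ≤
        ∑ i : Fin d, zvec d i * ∑ j, Lmat d t i j * zvec d j :=
      Finset.sum_le_sum (fun i _ => mul_le_mul_of_nonneg_left (inner i) (zvec_nonneg d i))
    refine le_trans ?_ step1
    have hterm2 : ∀ i : Fin d,
        (Zd d)⁻¹ * t * (((i:ℝ)+1+t^2)⁻¹ * gcl (i:ℝ) (d*t^2)) ≤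
          zvec d i * ((Real.sqrt (Zd d))⁻¹ * t * (Real.sqrt ((i:ℝ)+1+t^2))⁻¹ * gcl (i:ℝ) (d*t^2)) := by
      intro i
      have e1 : (Real.sqrt (Zd d))⁻¹ * (Real.sqrt (Zd d))⁻¹ = (Zd d)⁻¹ := by
        rw [← mul_inv, Real.mul_self_sqrt hZpos.le]
      have hsq : ((i:ℝ)+1+t^2)⁻¹ ≤ (Real.sqrt ((i:ℝ)+1))⁻¹ * (Real.sqrt ((i:ℝ)+1+t^2))⁻¹ := by
        rw [← mul_inv]
        apply inv_anti₀ (by positivity)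
        have h1 : Real.sqrt ((i:ℝ)+1) * Real.sqrt ((i:ℝ)+1+t^2) ≤
            Real.sqrt ((i:ℝ)+1+t^2) * Real.sqrt ((i:ℝ)+1+t^2) :=
          mul_le_mul_of_nonneg_right (Real.sqrt_le_sqrt (by nlinarith [sq_nonneg t]))
            (Real.sqrt_nonneg _)
        rwa [Real.mul_self_sqrt (by positivity)] at h1
      calc (Zd d)⁻¹ * t * (((i:ℝ)+1+t^2)⁻¹ * gcl (i:ℝ) (d*t^2))
          ≤ (Zd d)⁻¹ * t * (((Real.sqrt ((i:ℝ)+1))⁻¹ * (Real.sqrt ((i:ℝ)+1+t^2))⁻¹) *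
              gcl (i:ℝ) (d*t^2)) := by
            apply mul_le_mul_of_nonneg_left _ (by positivity)
            exact mul_le_mul_of_nonneg_right hsq (gcl_nonneg _ _)
        _ = zvec d i * ((Real.sqrt (Zd d))⁻¹ * t * (Real.sqrt ((i:ℝ)+1+t^2))⁻¹ *
              gcl (i:ℝ) (d*t^2)) := by
            unfold zvec; rw [← e1]; ring
    refine le_trans ?_ (Finset.sum_le_sum (fun i _ => hterm2 i))
    rw [Fin.sum_univ_eq_sum_range
      (fun i => (Zd d)⁻¹ * t * (((i:ℝ)+1+t^2)⁻¹ * gcl (i:ℝ) (d*t^2))), Finset.mul_sum]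
    have hgcl1 : ∀ i ∈ Finset.range k, ((i:ℝ)+1+t^2)⁻¹ =
        ((i:ℝ)+1+t^2)⁻¹ * gcl (i:ℝ) ((d:ℝ)*t^2) := by
      intro i hi
      rw [gcl_eq_one, mul_one]
      have hik : i < k := Finset.mem_range.mp hi
      have h1 : i + 1 ≤ Nat.floor ((d:ℝ)*t^2) := by omega
      calc (i:ℝ)+1 = ((i+1 : ℕ):ℝ) := by push_cast; ring
        _ ≤ ((Nat.floor ((d:ℝ)*t^2) : ℕ):ℝ) := by exact_mod_cast h1
        _ ≤ (d:ℝ)*t^2 := Nat.floor_le (by positivity)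
    calc ∑ i ∈ Finset.range k, (Zd d)⁻¹ * t * ((i:ℝ)+1+t^2)⁻¹
        = ∑ i ∈ Finset.range k, (Zd d)⁻¹ * t * (((i:ℝ)+1+t^2)⁻¹ * gcl (i:ℝ) ((d:ℝ)*t^2)) :=
          Finset.sum_congr rfl (fun i hi => by rw [← hgcl1 i hi])
      _ ≤ ∑ i ∈ Finset.range d, (Zd d)⁻¹ * t * (((i:ℝ)+1+t^2)⁻¹ * gcl (i:ℝ) ((d:ℝ)*t^2)) :=
          Finset.sum_le_sum_of_subset_of_nonneg
            (Finset.range_subset_range.mpr (min_le_left _ _))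
            (fun i _ _ => mul_nonneg (by positivity)
              (mul_nonneg (by positivity) (gcl_nonneg _ _)))
  -- Step B
  have hB : Real.log ((k:ℝ)+1+t^2) - Real.log (((0:ℕ):ℝ)+1+t^2) ≤
      ∑ i ∈ Finset.range k, ((i:ℝ)+1+t^2)⁻¹ := by
    rw [← Finset.sum_range_sub (fun n : ℕ => Real.log ((n:ℝ)+1+t^2)) k]
    apply Finset.sum_le_sum
    intro i _
    have hx : (0:ℝ) < (i:ℝ)+1+t^2 := by positivity
    have h := Real.log_le_sub_one_of_pos
      (show (0:ℝ) < (((i:ℝ)+1)+1+t^2)/((i:ℝ)+1+t^2) by positivity)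
    rw [Real.log_div (by positivity) hx.ne'] at h
    have e : (((i:ℝ)+1)+1+t^2)/((i:ℝ)+1+t^2) - 1 = ((i:ℝ)+1+t^2)⁻¹ := by
      field_simp
      ring
    push_cast
    linarith [h, e]
  have hB' : Real.log ((k:ℝ)+1+t^2) - Real.log (1+t^2) ≤
      ∑ i ∈ Finset.range k, ((i:ℝ)+1+t^2)⁻¹ := by
    simpa using hB
  -- Step C
  have hC : D - 5*L ≤ Real.log ((k:ℝ)+1+t^2) - Real.log (1+t^2) := by
    rcases le_total 1 t with htl | htl
    · have hμt : μ = t := max_eq_left (by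
        have h1 : t⁻¹ ≤ 1 := by
          nlinarith [mul_inv_cancel₀ ht.ne', inv_pos.mpr ht]
        linarith)
      have ht2 : 1 ≤ t^2 := by nlinarith
      have hdt2 : (d:ℝ) ≤ (d:ℝ)*t^2 := by
        nlinarith [mul_le_mul_of_nonneg_left ht2 (show (0:ℝ) ≤ (d:ℝ) by positivity)]
      have hkd : k = d := by
        have : d ≤ Nat.floor ((d:ℝ)*t^2) := Nat.le_floor (by push_cast; linarith)
        omega
      have hlog1 : Real.log ((d:ℝ)*(1+t^2)/(2*t^2)) ≤ Real.log ((d:ℝ)+1+t^2) :=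
        Real.log_le_log (by positivity) (by rw [div_le_iff₀ (by positivity)]; nlinarith [mul_le_mul_of_nonneg_left ht2 (show (0:ℝ) ≤ (d:ℝ) by positivity)])
      have e2 : Real.log ((d:ℝ)*(1+t^2)/(2*t^2)) =
          Real.log d + Real.log (1+t^2) - (Real.log 2 + 2*Real.log t) := by
        rw [Real.log_div (by positivity) (by positivity),
          Real.log_mul (by positivity) (by positivity),
          Real.log_mul (by norm_num) (by positivity), Real.log_pow]
        push_cast; ring
      rw [e2] at hlog1
      have hmu := mu_ineq t htl
      rw [hkd, hDdef, hLdef, hμt]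
      push_cast
      linarith
    · have hinv : 1 ≤ t⁻¹ := by nlinarith [mul_inv_cancel₀ ht.ne', inv_pos.mpr ht]
      have hμt : μ = t⁻¹ := max_eq_right (le_trans htl hinv)
      have hfl : Nat.floor ((d:ℝ)*t^2) ≤ d := by
        have h1 : (d:ℝ)*t^2 ≤ (d:ℝ) := by nlinarith [mul_nonneg (show (0:ℝ) ≤ (d:ℝ) by positivity) (show (0:ℝ) ≤ 1 - t^2 by nlinarith)]
        calc Nat.floor ((d:ℝ)*t^2) ≤ Nat.floor ((d:ℝ)) := Nat.floor_mono h1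
          _ = d := Nat.floor_natCast d
      have hkf : k = Nat.floor ((d:ℝ)*t^2) := by omega
      have hkbig : (d:ℝ)*t^2 ≤ (k:ℝ)+1+t^2 := by
        have h2 := Nat.lt_floor_add_one ((d:ℝ)*t^2)
        rw [hkf]
        nlinarith [sq_nonneg t]
      have hlog1 : Real.log ((d:ℝ)*t^2) ≤ Real.log ((k:ℝ)+1+t^2) :=
        Real.log_le_log (by positivity) hkbig
      have hlog2 : Real.log (1+t^2) ≤ Real.log 2 :=
        Real.log_le_log (by positivity) (by nlinarith)
      have e2 : Real.log ((d:ℝ)*t^2) = Real.log d - 2*Real.log t⁻¹ := by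
        rw [Real.log_mul (by positivity) (by positivity), Real.log_pow, Real.log_inv]
        push_cast; ring
      rw [e2] at hlog1
      have hmu := mu_ineq t⁻¹ hinv
      rw [hDdef, hLdef, hμt]
      linarith
  -- Step D: conclude
  set A := Real.log ((k:ℝ)+1+t^2) - Real.log (1+t^2) with hAdef
  have hA0 : 0 ≤ A := by
    rw [hAdef]
    have : Real.log (1+t^2) ≤ Real.log ((k:ℝ)+1+t^2) :=
      Real.log_le_log (by positivity) (by have : (0:ℝ) ≤ (k:ℝ) := Nat.cast_nonneg k; linarith)
    linarith
  calc t * (1 - 5 * L / D) = t * ((D - 5*L)/D) := by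
        rw [sub_div, div_self hD.ne']
    _ ≤ t * (A/D) := by
        apply mul_le_mul_of_nonneg_left _ ht.le
        exact (div_le_div_iff_of_pos_right hD).mpr hC
    _ ≤ t * (A/(Zd d)) := by
        apply mul_le_mul_of_nonneg_left _ ht.le
        exact div_le_div_of_nonneg_left hA0 hZpos hZle
    _ = (Zd d)⁻¹ * t * A := by rw [div_eq_mul_inv]; ring
    _ ≤ (Zd d)⁻¹ * t * ∑ i ∈ Finset.range k, ((i:ℝ)+1+t^2)⁻¹ :=
        mul_le_mul_of_nonneg_left hB' (by positivity)
    _ ≤ ∑ i, ∑ j, Lmat d t i j * zvec d i * zvec d j := hSA
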